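/- Let g(z) = Σ_{j=1}^t e^{a_j z + b_j} with real frequencies a_1 < ... < a_t and b_j ∈ ℂ, and let δ := min_{p≠q}|a_p − a_q|. Suppose w_1 < w_2 are consecutive points of Trop(g) (i.e., no point of Trop(g) lies strictly between them) with w_2 − w_1 ≥ 2 log 3/δ. Then g has no complex roots z with Re(z) ∈ [w_1 + log 3/δ, w_2 − log 3/δ]. -/

import Mathlib

noncomputable section

/-- The Archimedean tropical variety of a univariate exponential sum. -/
def Trop (t : ℕ) (a : Fin t → ℝ) (b : Fin t → ℂ) : Set ℝ :=
  {w | ∃ j k : Fin t, j ≠ k ∧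
    (∀ i : Fin t, a i * w + (b i).re ≤ a j * w + (b j).re) ∧
    a j * w + (b j).re = a k * w + (b k).re}


lemma geo (n : ℕ) : ∑ k ∈ Finset.Icc 1 n, ((1:ℝ)/3)^k ≤ (1 - (1/3)^n)/2 := by
  induction n with
  | zero => simp
  | succ n ih =>
    rw [Finset.sum_Icc_succ_top (by omega)]
    nlinarith [pow_succ ((1:ℝ)/3) n, pow_pos (by norm_num : (0:ℝ)<1/3) n]

lemma gap_lemma {t : ℕ} {a : Fin t → ℝ} (ha : StrictMono a) {δ : ℝ}
    (hlb : ∀ p q : Fin t, p ≠ q → δ ≤ |a p - a q|) :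
    ∀ n : ℕ, ∀ i j : Fin t, (j:ℕ) = (i:ℕ) + n + 1 → ((n:ℝ)+1) * δ ≤ a j - a i := by
  intro n
  induction n with
  | zero =>
    intro i j hij
    have hij' : i < j := by rw [Fin.lt_def]; omega
    have h1 : i ≠ j := ne_of_lt hij'
    have := hlb i j h1
    rw [abs_sub_comm, abs_of_pos (by linarith [ha hij'])] at this
    push_cast; linarith
  | succ n ih =>
    intro i j hij
    have hm : (i:ℕ) + n + 1 < t := by have := j.isLt; omega
    set m : Fin t := ⟨(i:ℕ) + n + 1, hm⟩ with hmdef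
    have h1 := ih i m rfl
    have hmj : m < j := by rw [Fin.lt_def]; simp [hmdef]; omega
    have h2 := hlb m j (ne_of_lt hmj)
    rw [abs_sub_comm, abs_of_pos (by linarith [ha hmj])] at h2
    push_cast; push_cast at h1; linarith

lemma endpoint_le {t : ℕ} (a r : Fin t → ℝ) (j₀ : Fin t) (u v : ℝ) (huv : u < v)
    (hu : ∀ i, i ≠ j₀ → a i * u + r i < a j₀ * u + r j₀)
    (hno : ∀ w, u ≤ w → w < v →
      ¬ (∃ k, k ≠ j₀ ∧ (∀ i, a i * w + r i ≤ a j₀ * w + r j₀) ∧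
          a j₀ * w + r j₀ = a k * w + r k)) :
    ∀ i, a i * v + r i ≤ a j₀ * v + r j₀ := by
  by_contra h
  push_neg at h
  obtain ⟨i₁, hi₁⟩ := h
  set F : Finset (Fin t) := Finset.univ.filter (fun i => a j₀ * v + r j₀ < a i * v + r i) with hF
  have hFne : F.Nonempty := ⟨i₁, by simp [hF, hi₁]⟩
  set c : Fin t → ℝ := fun i => u + ((a j₀ * u + r j₀) - (a i * u + r i)) / (a i - a j₀) with hc
  have hmemF : ∀ i, i ∈ F → a j₀ * v + r j₀ < a i * v + r i := by
    intro i hi; simpa [hF] using hi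
  have hne : ∀ i ∈ F, i ≠ j₀ := by
    intro i hi hcon; have := hmemF i hi; rw [hcon] at this; linarith
  have hslope : ∀ i ∈ F, 0 < a i - a j₀ := by
    intro i hi
    have h1 := hu i (hne i hi)
    have h2 := hmemF i hi
    nlinarith [sub_pos.mpr huv]
  have hid : ∀ i ∈ F, ∀ w : ℝ, (a i * w + r i) - (a j₀ * w + r j₀) = (a i - a j₀) * (w - c i) := by
    intro i hi w
    have hs := hslope i hi
    rw [hc]; field_simp; ring
  have huc : ∀ i ∈ F, u < c i := by
    intro i hi
    have h1 := hu i (hne i hi)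
    have h2 := hid i hi u
    nlinarith [hslope i hi]
  have hcv : ∀ i ∈ F, c i < v := by
    intro i hi
    have h1 := hmemF i hi
    have h2 := hid i hi v
    nlinarith [hslope i hi]
  obtain ⟨i₀, hi₀F, hi₀⟩ := Finset.exists_mem_eq_inf' hFne c
  set w : ℝ := F.inf' hFne c with hw
  have hwu : u < w := by rw [hi₀]; exact huc i₀ hi₀F
  have hwv : w < v := by rw [hi₀]; exact hcv i₀ hi₀F
  apply hno w (le_of_lt hwu) hwv
  refine ⟨i₀, hne i₀ hi₀F, ?_, ?_⟩
  · intro i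
    by_contra hcon
    push_neg at hcon
    have hiu := hu i (by intro hh; rw [hh] at hcon; linarith)
    have hsk : 0 < a i - a j₀ := by nlinarith [sub_pos.mpr hwu]
    have hiF : i ∈ F := by
      simp only [hF, Finset.mem_filter, Finset.mem_univ, true_and]
      have h2 : (a i * w + r i) - (a j₀ * w + r j₀) = (a i - a j₀) * (w - c i) := by
        rw [hc]; field_simp; ring
      have h3 : (a i * v + r i) - (a j₀ * v + r j₀) = (a i - a j₀) * (v - c i) := by
        rw [hc]; field_simp; ring
      nlinarith
    have hle : w ≤ c i := Finset.inf'_le c hiF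
    have h2 := hid i hiF w
    nlinarith
  · have := hid i₀ hi₀F w
    rw [hi₀] at this ⊢
    simp at this
    linarith [this]

/-- a root-free vertical strip between two consecutive points of `Trop(g)`
that are at distance at least `2 log 3 / δ(g)` apart. -/
theorem no_root_in_gap_strip (t : ℕ) (a : Fin t → ℝ) (b : Fin t → ℂ)
    (ha : StrictMono a) (δ : ℝ)
    (hδ : IsLeast {d : ℝ | ∃ p q : Fin t, p ≠ q ∧ d = |a p - a q|} δ)
    (w₁ w₂ : ℝ) (h₁ : w₁ ∈ Trop t a b) (h₂ : w₂ ∈ Trop t a b) (hlt : w₁ < w₂)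
    (hcons : ∀ w ∈ Trop t a b, ¬ (w₁ < w ∧ w < w₂))
    (hgap : 2 * Real.log 3 / δ ≤ w₂ - w₁)
    (z : ℂ) (hz : ∑ j, Complex.exp (a j * z + b j) = 0) :
    ¬ (w₁ + Real.log 3 / δ ≤ z.re ∧ z.re ≤ w₂ - Real.log 3 / δ) := by
  rintro ⟨hL1, hL2⟩
  obtain ⟨p, q, hpq, hdeq⟩ := hδ.1
  have hδpos : 0 < δ := by
    rw [hdeq]
    exact abs_pos.mpr (sub_ne_zero.mpr (fun h => hpq (ha.injective h)))
  have hlb : ∀ p q : Fin t, p ≠ q → δ ≤ |a p - a q| := fun p q h => hδ.2 ⟨p, q, h, rfl⟩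
  have hlog3 : (0:ℝ) < Real.log 3 := Real.log_pos (by norm_num)
  set L : ℝ := Real.log 3 / δ with hLdef
  have hLpos : 0 < L := div_pos hlog3 hδpos
  set r : Fin t → ℝ := fun i => (b i).re with hrdef
  set wm : ℝ := (w₁ + w₂)/2 with hwm
  have hwm1 : w₁ < wm := by rw [hwm]; linarith
  have hwm2 : wm < w₂ := by rw [hwm]; linarith
  -- the maximizer at the midpoint
  obtain ⟨j₀, _, hj₀⟩ := Finset.exists_max_image Finset.univ (fun i => a i * wm + r i)
    ⟨p, Finset.mem_univ p⟩
  have hstrict : ∀ i, i ≠ j₀ → a i * wm + r i < a j₀ * wm + r j₀ := by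
    intro i hi
    rcases lt_or_eq_of_le (hj₀ i (Finset.mem_univ i)) with h | h
    · exact h
    · exfalso
      exact hcons wm ⟨j₀, i, Ne.symm hi, fun i' => hj₀ i' (Finset.mem_univ i'), h.symm⟩
        ⟨hwm1, hwm2⟩
  have h₂' : ∀ i, a i * w₂ + r i ≤ a j₀ * w₂ + r j₀ := by
    apply endpoint_le a r j₀ wm w₂ hwm2 hstrict
    rintro w hw1 hw2 ⟨k, hk, hmax, heq⟩
    exact hcons w ⟨j₀, k, Ne.symm hk, hmax, heq⟩ ⟨lt_of_lt_of_le hwm1 hw1, hw2⟩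
  have h₁' : ∀ i, a i * w₁ + r i ≤ a j₀ * w₁ + r j₀ := by
    have key := endpoint_le (fun i => -a i) r j₀ (-wm) (-w₁) (by linarith)
      (by intro i hi; simpa [neg_mul_neg] using hstrict i hi)
      (by
        rintro w hw1 hw2 ⟨k, hk, hmax, heq⟩
        refine hcons (-w) ⟨j₀, k, Ne.symm hk, ?_, ?_⟩ ⟨by linarith, by linarith⟩
        · intro i
          have := hmax i
          simp only [neg_mul] at this
          simp only [mul_neg]
          linarith
        · simp only [neg_mul] at heq
          simp only [mul_neg]
          linarith)
    intro i
    have := key i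
    simpa [neg_mul_neg] using this
  set w : ℝ := z.re with hwz
  have hw1 : L ≤ w - w₁ := by linarith
  have hw2 : L ≤ w₂ - w := by linarith
  set E : ℝ := Real.exp (a j₀ * w + r j₀) with hE
  have hEpos : 0 < E := Real.exp_pos _
  have hpow : ∀ k : ℕ, Real.exp (a j₀ * w + r j₀ - (k:ℝ) * Real.log 3) = E * (1/3)^k := by
    intro k
    rw [Real.exp_sub, Real.exp_nat_mul, Real.exp_log (by norm_num : (0:ℝ) < 3)]
    rw [div_eq_mul_inv, ← inv_pow]
    norm_num
    exact hE.symm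
  have key1 : ∀ i : Fin t, i < j₀ →
      Real.exp (a i * w + r i) ≤ E * (1/3:ℝ)^((j₀:ℕ) - (i:ℕ)) := by
    intro i hi
    have hilt : (i:ℕ) < (j₀:ℕ) := hi
    set k : ℕ := (j₀:ℕ) - (i:ℕ) with hkdef
    have hk1 : 1 ≤ k := by omega
    have hgapk : (k:ℝ) * δ ≤ a j₀ - a i := by
      have := gap_lemma ha hlb (k-1) i j₀ (by omega)
      have hc : ((k-1:ℕ):ℝ) + 1 = (k:ℝ) := by push_cast [hk1]; ring
      linarith [hc ▸ this]
    have hstep : a i * w + r i ≤ a j₀ * w + r j₀ - (k:ℝ) * Real.log 3 := by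
      have e4 : (a j₀ - a i) * (w - w₁) =
          (a j₀ * w + r j₀) - (a i * w + r i) - ((a j₀ * w₁ + r j₀) - (a i * w₁ + r i)) := by
        ring
      have e1 : (k:ℝ) * δ * L ≤ (k:ℝ) * δ * (w - w₁) := by
        apply mul_le_mul_of_nonneg_left hw1
        positivity
      have e2 : (k:ℝ) * δ * (w - w₁) ≤ (a j₀ - a i) * (w - w₁) := by
        apply mul_le_mul_of_nonneg_right hgapk
        linarith
      have e3 : (k:ℝ) * δ * L = (k:ℝ) * Real.log 3 := by
        rw [hLdef]; field_simp
      linarith [h₁' i]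
    calc Real.exp (a i * w + r i) ≤ Real.exp (a j₀ * w + r j₀ - (k:ℝ) * Real.log 3) :=
          Real.exp_le_exp.mpr hstep
      _ = E * (1/3:ℝ)^k := hpow k
  have key2 : ∀ i : Fin t, j₀ < i →
      Real.exp (a i * w + r i) ≤ E * (1/3:ℝ)^((i:ℕ) - (j₀:ℕ)) := by
    intro i hi
    have hilt : (j₀:ℕ) < (i:ℕ) := hi
    set k : ℕ := (i:ℕ) - (j₀:ℕ) with hkdef
    have hk1 : 1 ≤ k := by omega
    have hgapk : (k:ℝ) * δ ≤ a i - a j₀ := by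
      have := gap_lemma ha hlb (k-1) j₀ i (by omega)
      have hc : ((k-1:ℕ):ℝ) + 1 = (k:ℝ) := by push_cast [hk1]; ring
      linarith [hc ▸ this]
    have hstep : a i * w + r i ≤ a j₀ * w + r j₀ - (k:ℝ) * Real.log 3 := by
      have e4 : (a i - a j₀) * (w₂ - w) =
          (a j₀ * w + r j₀) - (a i * w + r i) - ((a j₀ * w₂ + r j₀) - (a i * w₂ + r i)) := by
        ring
      have e1 : (k:ℝ) * δ * L ≤ (k:ℝ) * δ * (w₂ - w) := by
        apply mul_le_mul_of_nonneg_left hw2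
        positivity
      have e2 : (k:ℝ) * δ * (w₂ - w) ≤ (a i - a j₀) * (w₂ - w) := by
        apply mul_le_mul_of_nonneg_right hgapk
        linarith
      have e3 : (k:ℝ) * δ * L = (k:ℝ) * Real.log 3 := by
        rw [hLdef]; field_simp
      linarith [h₂' i]
    calc Real.exp (a i * w + r i) ≤ Real.exp (a j₀ * w + r j₀ - (k:ℝ) * Real.log 3) :=
          Real.exp_le_exp.mpr hstep
      _ = E * (1/3:ℝ)^k := hpow k
  -- sum manipulation
  have habs : ∀ i : Fin t, ‖Complex.exp (↑(a i) * z + b i)‖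
      = Real.exp (a i * w + r i) := by
    intro i
    rw [Complex.norm_exp]
    congr 1
    simp [Complex.add_re, Complex.mul_re, hrdef, hwz]
  have hz' : Complex.exp (↑(a j₀) * z + b j₀)
      = - ∑ i ∈ Finset.univ.erase j₀, Complex.exp (↑(a i) * z + b i) := by
    have h := Finset.add_sum_erase Finset.univ
      (fun i => Complex.exp (↑(a i) * z + b i)) (Finset.mem_univ j₀)
    rw [hz] at h
    exact eq_neg_of_add_eq_zero_left h
  have h5 : E ≤ ∑ i ∈ Finset.univ.erase j₀, Real.exp (a i * w + r i) := by
    calc E = ‖Complex.exp (↑(a j₀) * z + b j₀)‖ := (habs j₀).symm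
      _ = ‖∑ i ∈ Finset.univ.erase j₀, Complex.exp (↑(a i) * z + b i)‖ := by
          rw [hz']; exact norm_neg _
      _ ≤ ∑ i ∈ Finset.univ.erase j₀, ‖Complex.exp (↑(a i) * z + b i)‖ :=
          norm_sum_le _ _
      _ = ∑ i ∈ Finset.univ.erase j₀, Real.exp (a i * w + r i) :=
          Finset.sum_congr rfl (fun i _ => habs i)
  -- split the sum
  set S : Finset (Fin t) := Finset.univ.erase j₀ with hS
  set T₁ : Finset (Fin t) := S.filter (fun i => i < j₀) with hT₁
  set T₂ : Finset (Fin t) := S.filter (fun i => ¬ i < j₀) with hT₂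
  have hsplit : ∑ i ∈ S, Real.exp (a i * w + r i)
      = ∑ i ∈ T₁, Real.exp (a i * w + r i) + ∑ i ∈ T₂, Real.exp (a i * w + r i) :=
    (Finset.sum_filter_add_sum_filter_not S _ _).symm
  have hbound1 : ∑ i ∈ T₁, Real.exp (a i * w + r i) ≤ E * ((1 - (1/3:ℝ)^(j₀:ℕ))/2) := by
    calc ∑ i ∈ T₁, Real.exp (a i * w + r i)
        ≤ ∑ i ∈ T₁, E * (1/3:ℝ)^((j₀:ℕ) - (i:ℕ)) := by
          apply Finset.sum_le_sum
          intro i hi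
          exact key1 i (Finset.mem_filter.mp hi).2
      _ = E * ∑ i ∈ T₁, (1/3:ℝ)^((j₀:ℕ) - (i:ℕ)) := by rw [Finset.mul_sum]
      _ ≤ E * ((1 - (1/3:ℝ)^(j₀:ℕ))/2) := by
          apply mul_le_mul_of_nonneg_left _ hEpos.le
          have himg : ∑ i ∈ T₁, (1/3:ℝ)^((j₀:ℕ) - (i:ℕ))
              = ∑ k ∈ T₁.image (fun i : Fin t => (j₀:ℕ) - (i:ℕ)), (1/3:ℝ)^k := by
            rw [Finset.sum_image]
            intro x hx y hy hxy
            have hx' : (x:ℕ) < (j₀:ℕ) := (Finset.mem_filter.mp hx).2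
            have hy' : (y:ℕ) < (j₀:ℕ) := (Finset.mem_filter.mp hy).2
            exact Fin.ext (by simp only at hxy; omega)
          rw [himg]
          calc ∑ k ∈ T₁.image (fun i : Fin t => (j₀:ℕ) - (i:ℕ)), (1/3:ℝ)^k
              ≤ ∑ k ∈ Finset.Icc 1 (j₀:ℕ), (1/3:ℝ)^k := by
                apply Finset.sum_le_sum_of_subset_of_nonneg
                · intro k hk
                  obtain ⟨i, hi, hik⟩ := Finset.mem_image.mp hk
                  have : (i:ℕ) < (j₀:ℕ) := (Finset.mem_filter.mp hi).2
                  rw [Finset.mem_Icc]; omega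
                · intro k _ _; positivity
            _ ≤ (1 - (1/3:ℝ)^(j₀:ℕ))/2 := geo _
  have hbound2 : ∑ i ∈ T₂, Real.exp (a i * w + r i)
      ≤ E * ((1 - (1/3:ℝ)^(t - 1 - (j₀:ℕ)))/2) := by
    have hT₂mem : ∀ i ∈ T₂, j₀ < i := by
      intro i hi
      obtain ⟨hiS, hnlt⟩ := Finset.mem_filter.mp hi
      have hne : i ≠ j₀ := Finset.ne_of_mem_erase hiS
      rcases lt_trichotomy i j₀ with h | h | h
      · exact absurd h hnlt
      · exact absurd h hne
      · exact h
    calc ∑ i ∈ T₂, Real.exp (a i * w + r i)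
        ≤ ∑ i ∈ T₂, E * (1/3:ℝ)^((i:ℕ) - (j₀:ℕ)) := by
          apply Finset.sum_le_sum
          intro i hi
          exact key2 i (hT₂mem i hi)
      _ = E * ∑ i ∈ T₂, (1/3:ℝ)^((i:ℕ) - (j₀:ℕ)) := by rw [Finset.mul_sum]
      _ ≤ E * ((1 - (1/3:ℝ)^(t - 1 - (j₀:ℕ)))/2) := by
          apply mul_le_mul_of_nonneg_left _ hEpos.le
          have himg : ∑ i ∈ T₂, (1/3:ℝ)^((i:ℕ) - (j₀:ℕ))
              = ∑ k ∈ T₂.image (fun i : Fin t => (i:ℕ) - (j₀:ℕ)), (1/3:ℝ)^k := by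
            rw [Finset.sum_image]
            intro x hx y hy hxy
            have hx' : (j₀:ℕ) < (x:ℕ) := hT₂mem x hx
            have hy' : (j₀:ℕ) < (y:ℕ) := hT₂mem y hy
            exact Fin.ext (by simp only at hxy; omega)
          rw [himg]
          calc ∑ k ∈ T₂.image (fun i : Fin t => (i:ℕ) - (j₀:ℕ)), (1/3:ℝ)^k
              ≤ ∑ k ∈ Finset.Icc 1 (t - 1 - (j₀:ℕ)), (1/3:ℝ)^k := by
                apply Finset.sum_le_sum_of_subset_of_nonneg
                · intro k hk
                  obtain ⟨i, hi, hik⟩ := Finset.mem_image.mp hk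
                  have h1 : (j₀:ℕ) < (i:ℕ) := hT₂mem i hi
                  have h2 : (i:ℕ) < t := i.isLt
                  rw [Finset.mem_Icc]; omega
                · intro k _ _; positivity
            _ ≤ (1 - (1/3:ℝ)^(t - 1 - (j₀:ℕ)))/2 := geo _
  have hp1 : (0:ℝ) < (1/3:ℝ)^(j₀:ℕ) := by positivity
  have hp2 : (0:ℝ) < (1/3:ℝ)^(t - 1 - (j₀:ℕ)) := by positivity
  nlinarith [h5, hsplit, hbound1, hbound2]
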